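/- arXiv:1609.01931 — 6 statements merged into one kernel-verified Lean document; each statement's English description precedes it below -/
import Mathlib

section
/- Let (p,S) be a partial partition of [n] such that p is non-crossing (as a partition of S with the order induced from the integers). Then among all partial partitions (q,S^c) with support S^c such that (p,S)∨(q,S^c) is a non-crossing partition of [n], there is a greatest one with respect to refinement, and it is given explicitly by: for i < j in S^c, i ∼ j if and only if no element k of {i,…,j}∩S is p-equivalent to an element l of S∖{i,…,j}. (This greatest element is called the Kreweras complement kr(p,S).) -/
namespace NCPaper

/-- The index set `[n] = {1, …, n}` inside `ℕ`. -/
def Idx (n : ℕ) : Set ℕ := Set.Icc 1 n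

/-- `r` is (the equivalence relation of) a partition of the set `S`:
a symmetric, transitive relation on `ℕ` whose domain is exactly `S`.
For `S ⊆ [n]` this encodes a partial partition of `[n]` with support `S`;
its blocks are the equivalence classes. -/
def IsPartitionOn (S : Set ℕ) (r : ℕ → ℕ → Prop) : Prop :=
  (∀ i j, r i j → r j i) ∧ (∀ i j k, r i j → r j k → r i k) ∧ (∀ i, r i i ↔ i ∈ S)

/-- A partition (relation) is non-crossing if there are no `i < j < k < l`
with `i ∼ k`, `j ∼ l` and `i ≁ j`. -/
def NonCrossing (r : ℕ → ℕ → Prop) : Prop :=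
  ∀ i j k l, i < j → j < k → k < l → r i k → r j l → r i j

/-- Refinement order on partitions encoded as relations:
`r ≤ s` iff every block of `r` is contained in a block of `s`. -/
def RelLE (r s : ℕ → ℕ → Prop) : Prop := ∀ i j, r i j → s i j

/-- Join of two partial partitions with complementary (disjoint) supports:
the partition whose blocks are the blocks of `r` together with those of `s`. -/
def relJoin (r s : ℕ → ℕ → Prop) : ℕ → ℕ → Prop := fun i j => r i j ∨ s i j

/-- `k` lies (weakly) between `i` and `j`, i.e. `k ∈ {min i j, …, max i j}`. -/
def Between (i j k : ℕ) : Prop := min i j ≤ k ∧ k ≤ max i j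

/-- The Kreweras complement `kr(r, S)` of the partial partition `(r, S)` of `[n]`:
the relation with support `[n] \ S` in which `i ∼ j` iff no element `k` of
`{i,…,j} ∩ S` is `r`-equivalent to an element `l` of `S \ {i,…,j}`. -/
def krRel (n : ℕ) (S : Set ℕ) (r : ℕ → ℕ → Prop) : ℕ → ℕ → Prop :=
  fun i j => i ∈ Idx n ∧ j ∈ Idx n ∧ i ∉ S ∧ j ∉ S ∧
    ∀ k l, k ∈ S → l ∈ S → Between i j k → ¬ Between i j l → ¬ r k l

/-- Transport of a relation along a map. -/
def mapRel (f : ℕ → ℕ) (r : ℕ → ℕ → Prop) : ℕ → ℕ → Prop :=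
  fun a b => ∃ i j, f i = a ∧ f j = b ∧ r i j

/-- `i ↦ 2i - δ(i)` where `δ(i) = 1` for odd `i` and `δ(i) = 0` for even `i`;
this maps `[2k]` onto `S = {1,4,5,8,…,4k-3,4k} ⊆ [4k]`. -/
def fS (i : ℕ) : ℕ := 2 * i - i % 2

/-- `i ↦ 2i - (1 - δ(i))`; this maps `[2k]` onto `Sᶜ = {2,3,6,7,…} ⊆ [4k]`. -/
def fSc (i : ℕ) : ℕ := 2 * i - (1 - i % 2)

/-- The nested Kreweras complement `kr′(π)` of a partition `π` of `[2k]`: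
transport `π` along `fS` to a partial partition of `[4k]` with support
`fS '' [2k]`, take its Kreweras complement and transport back along `fSc`. -/
def krNested (k : ℕ) (r : ℕ → ℕ → Prop) : ℕ → ℕ → Prop :=
  fun i j => krRel (4 * k) (fS '' Idx (2 * k)) (mapRel fS r) (fSc i) (fSc j)

/-- `π₀`: the partition of `[2k]` with blocks `{2i, 2i+1}`, indices mod `2k`
(so one block is `{2k, 1}`). -/
def piZero (k : ℕ) : ℕ → ℕ → Prop := fun i j =>
  i ∈ Idx (2 * k) ∧ j ∈ Idx (2 * k) ∧
    (i = j ∨ (Even i ∧ j = i + 1) ∨ (Even j ∧ i = j + 1) ∨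
      (i = 1 ∧ j = 2 * k) ∨ (j = 1 ∧ i = 2 * k))

/-- `π₁`: the partition of `[2k]` with blocks `{2i-1, 2i}`, `1 ≤ i ≤ k`. -/
def piOne (k : ℕ) : ℕ → ℕ → Prop := fun i j =>
  i ∈ Idx (2 * k) ∧ j ∈ Idx (2 * k) ∧
    (i = j ∨ (Odd i ∧ j = i + 1) ∨ (Odd j ∧ i = j + 1))

/-- The `i`-th odd position `2i - 1` in `[2n]`. -/
def oddPos (i : ℕ) : ℕ := 2 * i - 1

/-- The `i`-th even position `2i` in `[2n]`. -/
def evenPos (i : ℕ) : ℕ := 2 * i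

/-- The Kreweras complement `K(p)` of a partition `p` of `[n]`: transport `p`
along `i ↦ 2i-1` to the odd positions `σ = {1,3,…,2n-1}` of `[2n]`, take the
Kreweras complement there, and transport back along `i ↦ 2i`. -/
def Kmap (n : ℕ) (r : ℕ → ℕ → Prop) : ℕ → ℕ → Prop :=
  fun i j => krRel (2 * n) (oddPos '' Idx n) (mapRel oddPos r) (evenPos i) (evenPos j)

/-- `p° = (p̂,σ) ∨ (K̂(p),σᶜ)`: the partition of `[2n]` obtained by placing `p`
on the odd positions and `K(p)` on the even positions. -/
def pCirc (n : ℕ) (p : ℕ → ℕ → Prop) : ℕ → ℕ → Prop :=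
  relJoin (mapRel oddPos p) (mapRel evenPos (Kmap n p))

/-- `F(π)` for `π ≥ π₀`: `i ∼ j` iff `2i-1 ∼_π 2j-1`. -/
def Fmap (r : ℕ → ℕ → Prop) : ℕ → ℕ → Prop := fun i j => r (2 * i - 1) (2 * j - 1)

/-- `G(π)` for `π ≥ π₁`: `i ∼ j` iff `2i ∼_π 2j`. -/
def Gmap (r : ℕ → ℕ → Prop) : ℕ → ℕ → Prop := fun i j => r (2 * i) (2 * j)

/-- `B` is a block of the partition (relation) `r`. -/
def IsBlock (r : ℕ → ℕ → Prop) (B : Set ℕ) : Prop := ∃ i, r i i ∧ B = {j | r i j}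

/-- The number `|r|` of blocks of the partition `r`. -/
noncomputable def numBlocks (r : ℕ → ℕ → Prop) : ℕ := {B : Set ℕ | IsBlock r B}.ncard

/-- `B' ⪯ B` for `B = {i₁<…<i_t}`, `B' = {j₁<…<j_{t'}}`: `i₁ < j₁` and `j_{t'} < i_t`. -/
def Nested (B' B : Set ℕ) : Prop := sInf B < sInf B' ∧ sSup B' < sSup B

/-- The depth `d_p(B)` of a block `B`: the maximal number `m` of blocks in a
chain `B = X₁ ⪯ X₂ ⪯ … ⪯ X_m` of blocks of `p`. -/
noncomputable def depth (p : ℕ → ℕ → Prop) (B : Set ℕ) : ℕ :=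
  sSup {m : ℕ | ∃ c : ℕ → Set ℕ, c 1 = B ∧
    (∀ i, 1 ≤ i → i ≤ m → IsBlock p (c i)) ∧
    (∀ i, 1 ≤ i → i < m → Nested (c i) (c (i + 1)))}

/-- `p_{B,B'}`: the partition obtained from `p` by merging the blocks `B` and `B'`. -/
def mergeRel (p : ℕ → ℕ → Prop) (B B' : Set ℕ) : ℕ → ℕ → Prop :=
  fun i j => p i j ∨ (p i i ∧ p j j ∧ i ∈ B ∪ B' ∧ j ∈ B ∪ B')

/-- Two distinct blocks `B, B'` of `p` are adjacent if replacing them by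
`B ∪ B'` yields a non-crossing partition. -/
def Adjacent (p : ℕ → ℕ → Prop) (B B' : Set ℕ) : Prop :=
  IsBlock p B ∧ IsBlock p B' ∧ B ≠ B' ∧ NonCrossing (mergeRel p B B')

/-- The set of the `i` smallest elements of `B`. -/
def lowerPart (B : Set ℕ) (i : ℕ) : Set ℕ := {x ∈ B | (B ∩ Set.Iic x).ncard ≤ i}

/-- The set of the remaining elements of `B` (all but the `i` smallest). -/
def upperPart (B : Set ℕ) (i : ℕ) : Set ℕ := {x ∈ B | i < (B ∩ Set.Iic x).ncard}

/-- `p_{B,i}`: the partition obtained from `p` by splitting the block `B` into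
the block of its `i` smallest elements and the block of its remaining elements. -/
def splitRel (p : ℕ → ℕ → Prop) (B : Set ℕ) (i : ℕ) : ℕ → ℕ → Prop :=
  fun x y => p x y ∧ ((x ∈ lowerPart B i ∧ y ∈ lowerPart B i) ∨
    (x ∈ upperPart B i ∧ y ∈ upperPart B i) ∨ (x ∉ B ∧ y ∉ B))

/-- The `i`-th smallest element of `B` (1-indexed). -/
noncomputable def nthSmall (B : Set ℕ) (i : ℕ) : ℕ :=
  sInf {x | x ∈ B ∧ (B ∩ Set.Iic x).ncard = i}

/-- For a partial partition `(p,S)` of `[n]` with `p` non-crossing,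
the explicitly defined `krRel n S p` is a partial partition with support `[n] \ S`,
its join with `p` is a non-crossing partition of `[n]`, and it is the greatest
partial partition with support `[n] \ S` whose join with `p` is a non-crossing
partition of `[n]`. -/
theorem kreweras_complement_isGreatest
    (n : ℕ) (S : Set ℕ) (hS : S ⊆ Idx n)
    (p : ℕ → ℕ → Prop) (hp : IsPartitionOn S p) (hpnc : NonCrossing p) :
    IsPartitionOn (Idx n \ S) (krRel n S p) ∧
    IsPartitionOn (Idx n) (relJoin p (krRel n S p)) ∧
    NonCrossing (relJoin p (krRel n S p)) ∧
    (∀ q : ℕ → ℕ → Prop, IsPartitionOn (Idx n \ S) q →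
      IsPartitionOn (Idx n) (relJoin p q) → NonCrossing (relJoin p q) →
      RelLE q (krRel n S p)) := by
  obtain ⟨psym, ptr, pmem⟩ := hp
  have B : ∀ a b c : ℕ, Between a b c ↔ (min a b ≤ c ∧ c ≤ max a b) := fun _ _ _ => Iff.rfl
  have pdom : ∀ i j, p i j → i ∈ S ∧ j ∈ S := fun i j h =>
    ⟨(pmem i).1 (ptr _ _ _ h (psym _ _ h)), (pmem j).1 (ptr _ _ _ (psym _ _ h) h)⟩
  -- symmetry of krRel
  have krsym : ∀ i j, krRel n S p i j → krRel n S p j i := by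
    rintro i j ⟨hi, hj, hiS, hjS, h⟩
    refine ⟨hj, hi, hjS, hiS, fun k l hk hl hb hnb => h k l hk hl ?_ ?_⟩
    · simp only [B] at *; omega
    · simp only [B] at *; omega
  -- transitivity of krRel
  have krtr : ∀ i j m, krRel n S p i j → krRel n S p j m → krRel n S p i m := by
    rintro i j m ⟨hi, hj, hiS, hjS, hc1⟩ ⟨_, hm, _, hmS, hc2⟩
    refine ⟨hi, hm, hiS, hmS, fun k l hk hl hb hnb hpkl => ?_⟩
    have hki : k ≠ i := fun h => hiS (h ▸ hk)
    have hkj : k ≠ j := fun h => hjS (h ▸ hk)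
    have hkm : k ≠ m := fun h => hmS (h ▸ hk)
    have hli : l ≠ i := fun h => hiS (h ▸ hl)
    have hlj : l ≠ j := fun h => hjS (h ▸ hl)
    have hlm : l ≠ m := fun h => hmS (h ▸ hl)
    by_cases hkij : Between i j k
    · by_cases hlij : Between i j l
      · exact hc2 l k hl hk (by simp only [B] at *; omega)
          (by simp only [B] at *; omega) (psym _ _ hpkl)
      · exact hc1 k l hk hl hkij hlij hpkl
    · by_cases hljm : Between j m l
      · exact hc1 l k hl hk (by simp only [B] at *; omega) hkij (psym _ _ hpkl)
      · exact hc2 k l hk hl (by simp only [B] at *; omega) hljm hpkl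
  -- reflexivity characterization of krRel
  have krrefl : ∀ i, krRel n S p i i ↔ i ∈ Idx n \ S := by
    intro i
    constructor
    · rintro ⟨hi, _, hiS, _, _⟩; exact ⟨hi, hiS⟩
    · rintro ⟨hi, hiS⟩
      refine ⟨hi, hi, hiS, hiS, fun k l hk hl hb hnb => ?_⟩
      have : k = i := by simp only [B] at hb; omega
      exact absurd (this ▸ hk) hiS
  have krdom : ∀ i j, krRel n S p i j → (i ∈ Idx n ∧ i ∉ S) ∧ (j ∈ Idx n ∧ j ∉ S) := by
    rintro i j ⟨hi, hj, hiS, hjS, _⟩; exact ⟨⟨hi, hiS⟩, ⟨hj, hjS⟩⟩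
  have part1 : IsPartitionOn (Idx n \ S) (krRel n S p) := ⟨krsym, krtr, krrefl⟩
  -- the join is a partition of [n]
  have part2 : IsPartitionOn (Idx n) (relJoin p (krRel n S p)) := by
    refine ⟨?_, ?_, ?_⟩
    · rintro i j (h | h)
      · exact Or.inl (psym _ _ h)
      · exact Or.inr (krsym _ _ h)
    · rintro i j k (h1 | h1) (h2 | h2)
      · exact Or.inl (ptr _ _ _ h1 h2)
      · exact absurd (pdom _ _ h1).2 (krdom _ _ h2).1.2
      · exact absurd (pdom _ _ h2).1 (krdom _ _ h1).2.2
      · exact Or.inr (krtr _ _ _ h1 h2)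
    · intro i
      constructor
      · rintro (h | h)
        · exact hS (pdom _ _ h).1
        · exact (krdom _ _ h).1.1
      · intro hi
        by_cases hiS : i ∈ S
        · exact Or.inl ((pmem i).2 hiS)
        · exact Or.inr ((krrefl i).2 ⟨hi, hiS⟩)
  -- the join is non-crossing
  have part3 : NonCrossing (relJoin p (krRel n S p)) := by
    rintro i j k l h1 h2 h3 (hik | hik) (hjl | hjl)
    · exact Or.inl (hpnc i j k l h1 h2 h3 hik hjl)
    · -- p i k and kr j l : impossible
      obtain ⟨hjI, hlI, hjS, hlS, c2⟩ := hjl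
      obtain ⟨hkS, hiS⟩ := pdom _ _ (psym _ _ hik)
      exact absurd (psym _ _ hik) (c2 k i hkS hiS (by simp only [B]; omega)
        (by simp only [B]; omega))
    · -- kr i k and p j l : impossible
      obtain ⟨hiI, hkI, hiS, hkS, c1⟩ := hik
      obtain ⟨hjS, hlS⟩ := pdom _ _ hjl
      exact absurd hjl (c1 j l hjS hlS (by simp only [B]; omega) (by simp only [B]; omega))
    · -- kr i k and kr j l
      obtain ⟨hiI, hkI, hiS, hkS, c1⟩ := hik
      obtain ⟨hjI, hlI, hjS, hlS, c2⟩ := hjl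
      refine Or.inr ⟨hiI, hjI, hiS, hjS, fun a b ha hb hab hnab hpab => ?_⟩
      have haj : a ≠ j := fun h => hjS (h ▸ ha)
      have hbk : b ≠ k := fun h => hkS (h ▸ hb)
      have hbj : b ≠ j := fun h => hjS (h ▸ hb)
      by_cases hbik : Between i k b
      · exact c2 b a hb ha (by simp only [B] at *; omega)
          (by simp only [B] at *; omega) (psym _ _ hpab)
      · exact c1 a b ha hb (by simp only [B] at *; omega) hbik hpab
  refine ⟨part1, part2, part3, ?_⟩
  -- greatest element
  intro q hq hjoin hnc i j hqij
  obtain ⟨qsym, qtr, qmem⟩ := hq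
  have qdom : ∀ i j, q i j → (i ∈ Idx n \ S) ∧ (j ∈ Idx n \ S) := fun i j h =>
    ⟨(qmem i).1 (qtr _ _ _ h (qsym _ _ h)), (qmem j).1 (qtr _ _ _ (qsym _ _ h) h)⟩
  obtain ⟨⟨hiI, hiS⟩, ⟨hjI, hjS⟩⟩ := qdom i j hqij
  refine ⟨hiI, hjI, hiS, hjS, fun k l hk hl hb hnb hpkl => ?_⟩
  have hki : k ≠ i := fun h => hiS (h ▸ hk)
  have hkj : k ≠ j := fun h => hjS (h ▸ hk)
  have hli : l ≠ i := fun h => hiS (h ▸ hl)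
  have hlj : l ≠ j := fun h => hjS (h ▸ hl)
  rcases lt_trichotomy i j with hij | hij | hij
  · -- i < j, so i < k < j and (l < i or j < l)
    rcases (by simp only [B] at hb hnb; omega : l < i ∨ j < l) with hl' | hl'
    · rcases hnc l i k j hl' (by simp only [B] at hb; omega) (by simp only [B] at hb; omega)
        (Or.inl (psym _ _ hpkl)) (Or.inr hqij) with h | h
      · exact hiS (pdom _ _ h).2
      · exact ((qdom _ _ h).1).2 hl
    · rcases hnc i k j l (by simp only [B] at hb; omega) (by simp only [B] at hb; omega) hl'
        (Or.inr hqij) (Or.inl hpkl) with h | h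
      · exact hiS (pdom _ _ h).1
      · exact ((qdom _ _ h).2).2 hk
  · -- i = j : vacuous
    have : k = i := by simp only [B] at hb; omega
    exact absurd (this ▸ hk) hiS
  · -- j < i, so j < k < i and (l < j or i < l)
    rcases (by simp only [B] at hb hnb; omega : l < j ∨ i < l) with hl' | hl'
    · rcases hnc l j k i hl' (by simp only [B] at hb; omega) (by simp only [B] at hb; omega)
        (Or.inl (psym _ _ hpkl)) (Or.inr (qsym _ _ hqij)) with h | h
      · exact hjS (pdom _ _ h).2
      · exact ((qdom _ _ h).1).2 hl
    · rcases hnc j k i l (by simp only [B] at hb; omega) (by simp only [B] at hb; omega) hl'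
        (Or.inr (qsym _ _ hqij)) (Or.inl hpkl) with h | h
      · exact hjS (pdom _ _ h).1
      · exact ((qdom _ _ h).2).2 hk

end NCPaper
end

section
/- For every non-crossing partition π of [2k], kr′(π) = kr′(π ∨ π₀), where ∨ denotes the join in the refinement lattice of all partitions of [2k]. -/
namespace NCPaper

private lemma piZero_between (k i j : ℕ)
    (hi : fSc i ∈ Idx (4 * k)) (hj : fSc j ∈ Idx (4 * k)) {x y : ℕ}
    (h : piZero k x y) :
    Between (fSc i) (fSc j) (fS x) ↔ Between (fSc i) (fSc j) (fS y) := by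
  obtain ⟨hx, hy, hc⟩ := h
  simp only [Idx, Set.mem_Icc] at hx hy hi hj
  simp only [Nat.even_iff] at hc
  simp only [fS, fSc, Between] at hi hj ⊢
  rcases hc with rfl | ⟨he, rfl⟩ | ⟨he, rfl⟩ | ⟨rfl, rfl⟩ | ⟨rfl, rfl⟩ <;> omega

/-- for every non-crossing partition `π` of `[2k]`,
`kr′(π) = kr′(π ∨ π₀)`, where `π ∨ π₀` is the join of `π` and `π₀` in the
refinement lattice of all partitions of `[2k]` (characterized below as the
least partition of `[2k]` lying above both `π` and `π₀`). -/
theorem krNested_join_piZero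
    (k : ℕ) (π : ℕ → ℕ → Prop)
    (hπ : IsPartitionOn (Idx (2 * k)) π) (hnc : NonCrossing π)
    (q : ℕ → ℕ → Prop) (hq : IsPartitionOn (Idx (2 * k)) q)
    (hπq : RelLE π q) (h0q : RelLE (piZero k) q)
    (hleast : ∀ s : ℕ → ℕ → Prop, IsPartitionOn (Idx (2 * k)) s →
      RelLE π s → RelLE (piZero k) s → RelLE q s) :
    krNested k π = krNested k q := by
  -- the "base" relation whose transitive closure is the join
  set base : ℕ → ℕ → Prop := fun x y => π x y ∨ piZero k x y with hbase
  have hπsymm : ∀ x y, π x y → π y x := hπ.1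
  have hπmem : ∀ x y, π x y → x ∈ Idx (2 * k) ∧ y ∈ Idx (2 * k) := by
    intro x y h
    exact ⟨(hπ.2.2 x).mp (hπ.2.1 x y x h (hπsymm x y h)),
      (hπ.2.2 y).mp (hπ.2.1 y x y (hπsymm x y h) h)⟩
  have hbmem : ∀ x y, base x y → x ∈ Idx (2 * k) ∧ y ∈ Idx (2 * k) := by
    rintro x y (h | h)
    · exact hπmem x y h
    · exact ⟨h.1, h.2.1⟩
  have hbsymm : Symmetric base := by
    rintro x y (h | ⟨h1, h2, h3⟩)
    · exact Or.inl (hπsymm x y h)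
    · refine Or.inr ⟨h2, h1, ?_⟩; tauto
  -- the transitive closure is a partition on Idx (2k)
  have htgsymm : ∀ a b, Relation.TransGen base a b → Relation.TransGen base b a := by
    intro a b h
    induction h with
    | single h' => exact Relation.TransGen.single (hbsymm h')
    | tail _ h' ih => exact (Relation.TransGen.single (hbsymm h')).trans ih
  have htgmem : ∀ a b, Relation.TransGen base a b → a ∈ Idx (2 * k) := by
    intro a b h
    induction h with
    | single h' => exact (hbmem _ _ h').1
    | tail _ _ ih => exact ih
  have hs : IsPartitionOn (Idx (2 * k)) (Relation.TransGen base) := by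
    refine ⟨htgsymm, fun a b c h1 h2 => h1.trans h2, fun a => ⟨?_, ?_⟩⟩
    · intro h
      exact htgmem a a h
    · intro ha
      exact Relation.TransGen.single (Or.inl ((hπ.2.2 a).mpr ha))
  have hπs : RelLE π (Relation.TransGen base) :=
    fun a b h => Relation.TransGen.single (Or.inl h)
  have h0s : RelLE (piZero k) (Relation.TransGen base) :=
    fun a b h => Relation.TransGen.single (Or.inr h)
  have hqs : RelLE q (Relation.TransGen base) := hleast _ hs hπs h0s
  -- main proof
  funext i j
  apply propext
  simp only [krNested, krRel]
  constructor
  · rintro ⟨h1, h2, h3, h4, h5⟩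
    refine ⟨h1, h2, h3, h4, ?_⟩
    intro a b ha hb hina hinb hmap
    obtain ⟨x, y, hx, hy, hxy⟩ := hmap
    -- every base step preserves membership in the interval
    have step : ∀ u v, base u v →
        (Between (fSc i) (fSc j) (fS u) ↔ Between (fSc i) (fSc j) (fS v)) := by
      rintro u v (h | h)
      · constructor
        · intro hu
          by_contra hv
          exact h5 (fS u) (fS v) ⟨u, (hπmem u v h).1, rfl⟩ ⟨v, (hπmem u v h).2, rfl⟩
            hu hv ⟨u, v, rfl, rfl, h⟩
        · intro hv
          by_contra hu
          exact h5 (fS v) (fS u) ⟨v, (hπmem u v h).2, rfl⟩ ⟨u, (hπmem u v h).1, rfl⟩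
            hv hu ⟨v, u, rfl, rfl, hπsymm u v h⟩
      · exact piZero_between k i j h1 h2 h
    have key : ∀ u v, Relation.TransGen base u v →
        (Between (fSc i) (fSc j) (fS u) ↔ Between (fSc i) (fSc j) (fS v)) := by
      intro u v h
      induction h with
      | single h' => exact step _ _ h'
      | tail _ h' ih => exact ih.trans (step _ _ h')
    have := key x y (hqs x y hxy)
    rw [hx, hy] at this
    exact hinb (this.mp hina)
  · rintro ⟨h1, h2, h3, h4, h5⟩
    refine ⟨h1, h2, h3, h4, ?_⟩
    intro a b ha hb hina hinb hmap
    obtain ⟨x, y, hx, hy, hxy⟩ := hmap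
    exact h5 a b ha hb hina hinb ⟨x, y, hx, hy, hπq x y hxy⟩

end NCPaper
end

section
/- For every partition π of [2k], one has kr′(π) ≥ π₁; that is, 2i−1 ∼_{kr′(π)} 2i for every 1 ≤ i ≤ k. -/
namespace NCPaper

/-- for every partition `π` of `[2k]`, `kr′(π) ≥ π₁`; that is,
`2i-1 ∼ 2i` in `kr′(π)` for every `1 ≤ i ≤ k`. -/
theorem krNested_ge_piOne
    (k : ℕ) (π : ℕ → ℕ → Prop) (hπ : IsPartitionOn (Idx (2 * k)) π) :
    RelLE (piOne k) (krNested k π) ∧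
    (∀ i, 1 ≤ i → i ≤ k → krNested k π (2 * i - 1) (2 * i)) := by
  have hfS_val : ∀ m, (m % 2 = 1 ∧ fS m = 2 * m - 1) ∨ (m % 2 = 0 ∧ fS m = 2 * m) := by
    intro m
    rcases Nat.mod_two_eq_zero_or_one m with h | h <;> unfold fS <;> rw [h] <;> [right; left] <;>
      exact ⟨rfl, by omega⟩
  have hfSc_val : ∀ i, (i % 2 = 1 ∧ fSc i = 2 * i) ∨ (i % 2 = 0 ∧ fSc i = 2 * i - 1) := by
    intro i
    rcases Nat.mod_two_eq_zero_or_one i with h | h <;> unfold fSc <;> rw [h] <;> [right; left] <;>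
      exact ⟨rfl, by omega⟩
  have main : RelLE (piOne k) (krNested k π) := by
    rintro i j ⟨hi, hj, hcase⟩
    simp only [Idx, Set.mem_Icc] at hi hj
    simp only [Nat.odd_iff] at hcase
    refine ⟨?_, ?_, ?_, ?_, ?_⟩
    · rcases hfSc_val i with ⟨hi2, hiv⟩ | ⟨hi2, hiv⟩ <;> simp only [Idx, Set.mem_Icc] <;> omega
    · rcases hfSc_val j with ⟨hj2, hjv⟩ | ⟨hj2, hjv⟩ <;> simp only [Idx, Set.mem_Icc] <;> omega
    · rintro ⟨m, hm, heq⟩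
      simp only [Idx, Set.mem_Icc] at hm
      rcases hfSc_val i with ⟨hi2, hiv⟩ | ⟨hi2, hiv⟩ <;>
        rcases hfS_val m with ⟨hm2, hmv⟩ | ⟨hm2, hmv⟩ <;> omega
    · rintro ⟨m, hm, heq⟩
      simp only [Idx, Set.mem_Icc] at hm
      rcases hfSc_val j with ⟨hj2, hjv⟩ | ⟨hj2, hjv⟩ <;>
        rcases hfS_val m with ⟨hm2, hmv⟩ | ⟨hm2, hmv⟩ <;> omega
    · rintro a b ⟨m, hm, rfl⟩ hb hBa hBb hr
      simp only [Idx, Set.mem_Icc] at hm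
      simp only [Between] at hBa
      rcases hfSc_val i with ⟨hi2, hiv⟩ | ⟨hi2, hiv⟩ <;>
        rcases hfSc_val j with ⟨hj2, hjv⟩ | ⟨hj2, hjv⟩ <;>
        rcases hfS_val m with ⟨hm2, hmv⟩ | ⟨hm2, hmv⟩ <;>
        rcases hcase with rfl | ⟨ho, rfl⟩ | ⟨ho, rfl⟩ <;> omega
  refine ⟨main, fun i h1 hk => main _ _ ?_⟩
  refine ⟨?_, ?_, Or.inr (Or.inl ⟨?_, by omega⟩)⟩
  · simp only [Idx, Set.mem_Icc]; omega
  · simp only [Idx, Set.mem_Icc]; omega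
  · rw [Nat.odd_iff]; omega

end NCPaper
end

section
/- Let π ∈ NC(2n) with π ≥ π₀. Then K(F(π)) = G(kr′(π)). (Here F(π) is non-crossing and kr′(π) ≥ π₁, so both sides are defined.) -/
namespace NCPaper

private lemma cond_equiv (n i j : ℕ) (π : ℕ → ℕ → Prop)
    (hsym : ∀ a b, π a b → π b a)
    (htrans : ∀ a b c, π a b → π b c → π a c)
    (hdom' : ∀ k, 1 ≤ k → k ≤ 2*n → π k k)
    (hpair : ∀ k, k % 2 = 0 → 1 ≤ k → k + 1 ≤ 2*n → π k (k+1))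
    (hwrap : π (2*n) 1)
    (hi1 : 1 ≤ i) (hin : i ≤ n) (hj1 : 1 ≤ j) (hjn : j ≤ n) :
    (∀ p q, 1 ≤ p → p ≤ n → 1 ≤ q → q ≤ n →
        Between (2*i) (2*j) (2*p-1) → ¬ Between (2*i) (2*j) (2*q-1) →
        ¬ π (2*p-1) (2*q-1))
    ↔ (∀ k l, 1 ≤ k → k ≤ 2*n → 1 ≤ l → l ≤ 2*n →
        Between (4*i-1) (4*j-1) (fS k) → ¬ Between (4*i-1) (4*j-1) (fS l) →
        ¬ π k l) := by
  constructor
  · -- Cond1 → Cond2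
    intro hc k l hk1 hk2 hl1 hl2 hbk hnbl hkl
    simp only [Between, fS] at hbk hnbl
    have step1 : ∃ p, 1 ≤ p ∧ p ≤ n ∧ π k (2*p-1) ∧ Between (2*i) (2*j) (2*p-1) := by
      rcases Nat.mod_two_eq_zero_or_one k with hk | hk
      · refine ⟨k/2+1, by omega, by omega, ?_, ?_⟩
        · have h : 2*(k/2+1)-1 = k+1 := by omega
          rw [h]; exact hpair k hk hk1 (by omega)
        · simp only [Between]; omega
      · refine ⟨(k+1)/2, by omega, by omega, ?_, ?_⟩
        · have h : 2*((k+1)/2)-1 = k := by omega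
          rw [h]; exact hdom' k hk1 hk2
        · simp only [Between]; omega
    have step2 : ∃ q, 1 ≤ q ∧ q ≤ n ∧ π l (2*q-1) ∧ ¬ Between (2*i) (2*j) (2*q-1) := by
      rcases Nat.mod_two_eq_zero_or_one l with hl | hl
      · rcases Nat.lt_or_ge l (2*n) with hln | hln
        · refine ⟨l/2+1, by omega, by omega, ?_, ?_⟩
          · have h : 2*(l/2+1)-1 = l+1 := by omega
            rw [h]; exact hpair l hl hl1 (by omega)
          · simp only [Between]; omega
        · have hl2n : l = 2*n := by omega
          refine ⟨1, le_rfl, by omega, ?_, ?_⟩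
          · have h : 2*1-1 = 1 := by omega
            rw [h, hl2n]; exact hwrap
          · simp only [Between]; omega
      · refine ⟨(l+1)/2, by omega, by omega, ?_, ?_⟩
        · have h : 2*((l+1)/2)-1 = l := by omega
          rw [h]; exact hdom' l hl1 hl2
        · simp only [Between]; omega
    obtain ⟨p, hp1, hpn, hπkp, hbp⟩ := step1
    obtain ⟨q, hq1, hqn, hπlq, hbq⟩ := step2
    exact hc p q hp1 hpn hq1 hqn hbp hbq
      (htrans _ _ _ (hsym _ _ hπkp) (htrans _ _ _ hkl hπlq))
  · -- Cond2 → Cond1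
    intro hc p q hp1 hpn hq1 hqn hbp hbq
    apply hc (2*p-1) (2*q-1) (by omega) (by omega) (by omega) (by omega)
    · simp only [Between, fS] at hbp ⊢; omega
    · intro hb; apply hbq; simp only [Between, fS] at hb ⊢; omega

/-- for `π ∈ NC(2n)` with `π ≥ π₀`, `K(F(π)) = G(kr′(π))`. -/
theorem K_F_eq_G_krNested
    (n : ℕ) (π : ℕ → ℕ → Prop)
    (hπ : IsPartitionOn (Idx (2 * n)) π) (hnc : NonCrossing π)
    (h0 : RelLE (piZero n) π) :
    Kmap n (Fmap π) = Gmap (krNested n π) := by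
  obtain ⟨hsym, htrans, hdom⟩ := hπ
  have hdom' : ∀ k, 1 ≤ k → k ≤ 2*n → π k k := by
    intro k h1 h2
    exact (hdom k).mpr (by simp only [Idx, Set.mem_Icc]; omega)
  have hpair : ∀ k, k % 2 = 0 → 1 ≤ k → k + 1 ≤ 2*n → π k (k+1) := by
    intro k hk h1 h2
    exact h0 _ _ ⟨by simp only [Idx, Set.mem_Icc]; omega,
      by simp only [Idx, Set.mem_Icc]; omega,
      Or.inr (Or.inl ⟨Nat.even_iff.mpr hk, rfl⟩)⟩
  have hwrap : 1 ≤ n → π (2*n) 1 := by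
    intro hn
    exact h0 _ _ ⟨by simp only [Idx, Set.mem_Icc]; omega,
      by simp only [Idx, Set.mem_Icc]; omega,
      Or.inr (Or.inr (Or.inr (Or.inr ⟨rfl, rfl⟩)))⟩
  have hfsc : ∀ t : ℕ, fSc (2*t) = 4*t - 1 := by intro t; simp only [fSc]; omega
  funext i j
  apply propext
  constructor
  · rintro ⟨hi, hj, -, -, hc⟩
    simp only [Idx, evenPos, Set.mem_Icc] at hi hj
    have hi1 : 1 ≤ i := by omega
    have hin : i ≤ n := by omega
    have hj1 : 1 ≤ j := by omega
    have hjn : j ≤ n := by omega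
    have cond1 : ∀ p q, 1 ≤ p → p ≤ n → 1 ≤ q → q ≤ n →
        Between (2*i) (2*j) (2*p-1) → ¬ Between (2*i) (2*j) (2*q-1) →
        ¬ π (2*p-1) (2*q-1) := by
      intro p q hp1 hpn hq1 hqn hbp hbq hπpq
      exact hc (oddPos p) (oddPos q)
        ⟨p, by simp only [Idx, Set.mem_Icc]; omega, rfl⟩
        ⟨q, by simp only [Idx, Set.mem_Icc]; omega, rfl⟩
        hbp hbq ⟨p, q, rfl, rfl, hπpq⟩
    have cond2 := (cond_equiv n i j π hsym htrans hdom' hpair (hwrap (by omega))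
      hi1 hin hj1 hjn).mp cond1
    refine ⟨?_, ?_, ?_, ?_, ?_⟩
    · rw [hfsc]; simp only [Idx, Set.mem_Icc]; omega
    · rw [hfsc]; simp only [Idx, Set.mem_Icc]; omega
    · rintro ⟨k, hk, hfk⟩
      simp only [Idx, Set.mem_Icc] at hk
      rw [hfsc] at hfk
      simp only [fS] at hfk
      omega
    · rintro ⟨k, hk, hfk⟩
      simp only [Idx, Set.mem_Icc] at hk
      rw [hfsc] at hfk
      simp only [fS] at hfk
      omega
    · rintro a b ⟨k, hk, rfl⟩ ⟨l, hl, rfl⟩ hba hbb ⟨k', l', hk', hl', hkl⟩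
      simp only [Idx, Set.mem_Icc] at hk hl
      rw [hfsc, hfsc] at hba hbb
      have hkk : k' = k := by simp only [fS] at hk'; omega
      have hll : l' = l := by simp only [fS] at hl'; omega
      rw [hkk, hll] at hkl
      exact cond2 k l (by omega) (by omega) (by omega) (by omega) hba hbb hkl
  · rintro ⟨hi, hj, -, -, hc⟩
    rw [hfsc] at hi hj
    simp only [Idx, Set.mem_Icc] at hi hj
    have hi1 : 1 ≤ i := by omega
    have hin : i ≤ n := by omega
    have hj1 : 1 ≤ j := by omega
    have hjn : j ≤ n := by omega
    have cond2 : ∀ k l, 1 ≤ k → k ≤ 2*n → 1 ≤ l → l ≤ 2*n →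
        Between (4*i-1) (4*j-1) (fS k) → ¬ Between (4*i-1) (4*j-1) (fS l) →
        ¬ π k l := by
      intro k l hk1 hk2 hl1 hl2 hbk hnbl hkl
      exact hc (fS k) (fS l)
        ⟨k, by simp only [Idx, Set.mem_Icc]; omega, rfl⟩
        ⟨l, by simp only [Idx, Set.mem_Icc]; omega, rfl⟩
        (by rw [hfsc, hfsc]; exact hbk)
        (by intro hb; apply hnbl; rw [hfsc, hfsc] at hb; exact hb)
        ⟨k, l, rfl, rfl, hkl⟩
    have cond1 := (cond_equiv n i j π hsym htrans hdom' hpair (hwrap (by omega))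
      hi1 hin hj1 hjn).mpr cond2
    refine ⟨?_, ?_, ?_, ?_, ?_⟩
    · simp only [Idx, evenPos, Set.mem_Icc]; omega
    · simp only [Idx, evenPos, Set.mem_Icc]; omega
    · rintro ⟨p, hp, hfp⟩
      simp only [Idx, Set.mem_Icc] at hp
      simp only [oddPos, evenPos] at hfp
      omega
    · rintro ⟨q, hq, hfq⟩
      simp only [Idx, Set.mem_Icc] at hq
      simp only [oddPos, evenPos] at hfq
      omega
    · rintro a b ⟨p, hp, rfl⟩ ⟨q, hq, rfl⟩ hba hbb ⟨p', q', hp', hq', hpq⟩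
      simp only [Idx, Set.mem_Icc] at hp hq
      have hpp : p' = p := by simp only [oddPos] at hp'; omega
      have hqq : q' = q := by simp only [oddPos] at hq'; omega
      rw [hpp, hqq] at hpq
      exact cond1 p q (by omega) (by omega) (by omega) (by omega) hba hbb hpq

end NCPaper
end

section
/- For every p ∈ NC(n) the Kreweras complement K(p) is again non-crossing, and the map K : NC(n) → NC(n) is a bijection. -/
namespace NCPaper

section Aux

lemma between_comm' {i j k : ℕ} (h : Between i j k) : Between j i k := by
  unfold Between at *; omega

lemma krRel_symm {N : ℕ} {S : Set ℕ} {r : ℕ → ℕ → Prop} {i j : ℕ}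
    (h : krRel N S r i j) : krRel N S r j i := by
  obtain ⟨h1, h2, h3, h4, h5⟩ := h
  exact ⟨h2, h1, h4, h3, fun k l hk hl hbk hbl =>
    h5 k l hk hl (between_comm' hbk) (fun hb => hbl (between_comm' hb))⟩

lemma krRel_isPartitionOn {N : ℕ} {S : Set ℕ} {r : ℕ → ℕ → Prop}
    (hsym : ∀ i j, r i j → r j i) :
    IsPartitionOn (Idx N \ S) (krRel N S r) := by
  refine ⟨fun i j h => krRel_symm h, ?_, ?_⟩
  · rintro i j k ⟨hi, hj, hiS, hjS, h1⟩ ⟨_, hk, _, hkS, h2⟩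
    refine ⟨hi, hk, hiS, hkS, ?_⟩
    intro x y hx hy hbx hby hrxy
    have hxi : x ≠ i := fun h => hiS (h ▸ hx)
    have hxj : x ≠ j := fun h => hjS (h ▸ hx)
    have hxk : x ≠ k := fun h => hkS (h ▸ hx)
    have key : (Between i j x ∧ ¬ Between i j y) ∨ (Between j k x ∧ ¬ Between j k y)
        ∨ (Between i j y ∧ ¬ Between i j x) ∨ (Between j k y ∧ ¬ Between j k x) := by
      unfold Between at *; omega
    rcases key with ⟨h, h'⟩ | ⟨h, h'⟩ | ⟨h, h'⟩ | ⟨h, h'⟩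
    · exact h1 x y hx hy h h' hrxy
    · exact h2 x y hx hy h h' hrxy
    · exact h1 y x hy hx h h' (hsym _ _ hrxy)
    · exact h2 y x hy hx h h' (hsym _ _ hrxy)
  · intro i
    constructor
    · rintro ⟨hi, _, hiS, _, _⟩; exact ⟨hi, hiS⟩
    · rintro ⟨hi, hiS⟩
      refine ⟨hi, hi, hiS, hiS, ?_⟩
      intro k l hk _ hbk _ _
      have hki : k = i := by unfold Between at hbk; omega
      exact hiS (hki ▸ hk)

lemma krRel_nonCrossing {N : ℕ} {S : Set ℕ} {r : ℕ → ℕ → Prop}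
    (hsym : ∀ i j, r i j → r j i) :
    NonCrossing (krRel N S r) := by
  rintro i j k l hij hjk hkl ⟨hiI, hkI, hiS, hkS, h1⟩ ⟨hjI, hlI, hjS, hlS, h2⟩
  refine ⟨hiI, hjI, hiS, hjS, ?_⟩
  intro x y hx hy hbx hby hrxy
  have hxi : x ≠ i := fun h => hiS (h ▸ hx)
  have hxj : x ≠ j := fun h => hjS (h ▸ hx)
  have hyk : y ≠ k := fun h => hkS (h ▸ hy)
  have hyl : y ≠ l := fun h => hlS (h ▸ hy)
  have key : (Between i k x ∧ ¬ Between i k y) ∨ (Between j l y ∧ ¬ Between j l x) := by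
    unfold Between at *; omega
  rcases key with ⟨h, h'⟩ | ⟨h, h'⟩
  · exact h1 x y hx hy h h' hrxy
  · exact h2 y x hy hx h h' (hsym _ _ hrxy)

/-- Easy direction: `r ≤ kr(kr(r))`. -/
lemma kr_kr_superset {N : ℕ} {S : Set ℕ} {r : ℕ → ℕ → Prop}
    (hpart : IsPartitionOn S r) (hS : S ⊆ Idx N) :
    ∀ i j, r i j → krRel N (Idx N \ S) (krRel N S r) i j := by
  obtain ⟨hsym, htrans, hrefl⟩ := hpart
  intro i j hr
  have hiS : i ∈ S := (hrefl i).1 (htrans _ _ _ hr (hsym _ _ hr))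
  have hjS : j ∈ S := (hrefl j).1 (htrans _ _ _ (hsym _ _ hr) hr)
  refine ⟨hS hiS, hS hjS, fun h => h.2 hiS, fun h => h.2 hjS, ?_⟩
  rintro k l hk hl hbk hbl ⟨_, _, hkS, hlS, hQ⟩
  have hki : k ≠ i := fun h => hk.2 (h ▸ hiS)
  have hkj : k ≠ j := fun h => hk.2 (h ▸ hjS)
  have hli : l ≠ i := fun h => hl.2 (h ▸ hiS)
  have hlj : l ≠ j := fun h => hl.2 (h ▸ hjS)
  have key : (Between k l j ∧ ¬ Between k l i) ∨ (Between k l i ∧ ¬ Between k l j) := by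
    unfold Between at *; omega
  rcases key with ⟨h, h'⟩ | ⟨h, h'⟩
  · exact hQ j i hjS hiS h h' (hsym _ _ hr)
  · exact hQ i j hiS hjS h h' hr

end Aux

lemma mem_Idx {n x : ℕ} : x ∈ Idx n ↔ 1 ≤ x ∧ x ≤ n := Set.mem_Icc

/-- Hard direction: `kr(kr(r)) ≤ r` for a noncrossing partition `r` on an
"interleaved" support `S`. -/
lemma kr_kr_subset {N : ℕ} {S : Set ℕ} {r : ℕ → ℕ → Prop}
    (hS : S ⊆ Idx N)
    (hsucc : ∀ x ∈ S, x + 1 ≤ N → x + 1 ∈ Idx N \ S)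
    (hpred : ∀ x ∈ S, 2 ≤ x → x - 1 ∈ Idx N \ S)
    (hspec : (1:ℕ) ∈ S → N ∈ Idx N \ S)
    (hpart : IsPartitionOn S r) (hnc : NonCrossing r) :
    ∀ a b, krRel N (Idx N \ S) (krRel N S r) a b → r a b := by
  obtain ⟨hsym, htrans, hrefl⟩ := hpart
  have aux : ∀ a b, a < b → krRel N (Idx N \ S) (krRel N S r) a b → r a b := by
    rintro a b hab ⟨ha, hb, haE, hbE, hforall⟩
    have haS : a ∈ S := by by_contra h; exact haE ⟨ha, h⟩
    have hbS : b ∈ S := by by_contra h; exact hbE ⟨hb, h⟩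
    by_contra hrab
    have hraa : r a a := (hrefl a).2 haS
    set B : Set ℕ := {x | r a x} with hBdef
    have hBsub : B ⊆ S := fun x hx => (hrefl x).1 (htrans _ _ _ (hsym _ _ hx) hx)
    have hBa : a ∈ B := hraa
    have hBbdd : BddAbove B := ⟨N, fun x hx => (mem_Idx.mp (hS (hBsub hx))).2⟩
    have hBne : B.Nonempty := ⟨a, hBa⟩
    have hMB : sSup B ∈ B := Nat.sSup_mem hBne hBbdd
    have hmB : sInf B ∈ B := Nat.sInf_mem hBne
    set M := sSup B
    set m := sInf B
    have hle : ∀ x ∈ B, x ≤ M := fun x hx => le_csSup hBbdd hx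
    have hge : ∀ x ∈ B, m ≤ x := fun x hx => Nat.sInf_le hx
    have hrmM : r m M := htrans _ _ _ (hsym _ _ hmB) hMB
    have hclosed : ∀ x y, x ∈ S → m ≤ x → x ≤ M → r x y → m ≤ y ∧ y ≤ M := by
      intro x y hxS hx1 hx2 hxy
      by_cases hxB : x ∈ B
      · have hyB : y ∈ B := htrans _ _ _ hxB hxy
        exact ⟨hge _ hyB, hle _ hyB⟩
      · have hxm : x ≠ m := fun h => hxB (h ▸ hmB)
        have hxM : x ≠ M := fun h => hxB (h ▸ hMB)
        by_contra hcon
        have hy : y < m ∨ M < y := by omega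
        rcases hy with hy | hy
        · have h1 : r y m := hnc y m x M (by omega) (by omega) (by omega) (hsym _ _ hxy) hrmM
          have hyB : y ∈ B := htrans _ _ _ hmB (hsym _ _ h1)
          exact absurd (hge _ hyB) (by omega)
        · have h1 : r m x := hnc m x M y (by omega) (by omega) hy hrmM hxy
          exact hxB (htrans _ _ _ hmB h1)
    have haM : a ≤ M := hle _ hBa
    have hma : m ≤ a := hge _ hBa
    have hbN : b ≤ N := (mem_Idx.mp (hS hbS)).2
    by_cases hbM : M < b
    · -- Case 1 : b lies beyond the top of a's block
      have hkE : M + 1 ∈ Idx N \ S := hsucc M (hBsub hMB) (by omega)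
      by_cases hm2 : 2 ≤ m
      · -- Case 1a : use k = M+1, l = m-1
        have hlE : m - 1 ∈ Idx N \ S := hpred m (hBsub hmB) hm2
        refine hforall (M+1) (m-1) hkE hlE (by unfold Between; omega)
          (by unfold Between; omega) ⟨hkE.1, hlE.1, hkE.2, hlE.2, ?_⟩
        intro x y hxS hyS hbx hby hrxy
        have hxk : x ≠ M + 1 := fun h => hkE.2 (h ▸ hxS)
        have hxl : x ≠ m - 1 := fun h => hlE.2 (h ▸ hxS)
        have hx' : m ≤ x ∧ x ≤ M := by unfold Between at hbx; omega
        have hy' : ¬ (m ≤ y ∧ y ≤ M) := by unfold Between at hby; omega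
        exact hy' (hclosed x y hxS hx'.1 hx'.2 hrxy)
      · -- Case 1b : m = 1, use k = M+1, l = N
        have hm1 : m = 1 := by
          have := (mem_Idx.mp (hS (hBsub hmB))).1; omega
        have hlE : N ∈ Idx N \ S := hspec (hm1 ▸ hBsub hmB)
        have hbN' : b < N := by
          have : b ≠ N := fun h => hlE.2 (h ▸ hbS)
          omega
        refine hforall (M+1) N hkE hlE (by unfold Between; omega)
          (by unfold Between; omega) ⟨hkE.1, hlE.1, hkE.2, hlE.2, ?_⟩
        intro x y hxS hyS hbx hby hrxy
        have hxk : x ≠ M + 1 := fun h => hkE.2 (h ▸ hxS)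
        have hyk : y ≠ M + 1 := fun h => hkE.2 (h ▸ hyS)
        have hyI := mem_Idx.mp (hS hyS)
        have hx' : M < x := by unfold Between at hbx; omega
        have hy' : y ≤ M := by unfold Between at hby; omega
        have := hclosed y x hyS (by omega) hy' (hsym _ _ hrxy)
        omega
    · -- Case 2 : b lies in a gap of a's block
      push_neg at hbM
      have hbB : b ∉ B := hrab
      have hbM' : b < M := by
        have : b ≠ M := fun h => hbB (h ▸ hMB)
        omega
      have hCne : (B ∩ Set.Iio b).Nonempty := ⟨a, hBa, hab⟩
      have hCbdd : BddAbove (B ∩ Set.Iio b) := hBbdd.mono Set.inter_subset_left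
      have hcC : sSup (B ∩ Set.Iio b) ∈ B ∩ Set.Iio b := Nat.sSup_mem hCne hCbdd
      set c := sSup (B ∩ Set.Iio b)
      have hcB : c ∈ B := hcC.1
      have hcb : c < b := hcC.2
      have hcmax : ∀ x ∈ B, x < b → x ≤ c := fun x hx h => le_csSup hCbdd ⟨hx, h⟩
      have hDne : (B ∩ Set.Ioi b).Nonempty := ⟨M, hMB, hbM'⟩
      have hdD : sInf (B ∩ Set.Ioi b) ∈ B ∩ Set.Ioi b := Nat.sInf_mem hDne
      set d := sInf (B ∩ Set.Ioi b)
      have hdB : d ∈ B := hdD.1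
      have hbd : b < d := hdD.2
      have hdmin : ∀ x ∈ B, b < x → d ≤ x := fun x hx h => Nat.sInf_le ⟨hx, h⟩
      have hrcd : r c d := htrans _ _ _ (hsym _ _ hcB) hdB
      have hac : a ≤ c := hcmax a hBa hab
      have hdN : d ≤ N := (mem_Idx.mp (hS (hBsub hdB))).2
      have hb1 : 1 ≤ b := (mem_Idx.mp (hS hbS)).1
      have hkE : c + 1 ∈ Idx N \ S := hsucc c (hBsub hcB) (by omega)
      have hlE : d - 1 ∈ Idx N \ S := hpred d (hBsub hdB) (by omega)
      have hlb : d - 1 ≠ b := fun h => hlE.2 (h ▸ hbS)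
      refine hforall (c+1) (d-1) hkE hlE (by unfold Between; omega)
        (by unfold Between; omega) ⟨hkE.1, hlE.1, hkE.2, hlE.2, ?_⟩
      intro x y hxS hyS hbx hby hrxy
      have hxk : x ≠ c + 1 := fun h => hkE.2 (h ▸ hxS)
      have hxl : x ≠ d - 1 := fun h => hlE.2 (h ▸ hxS)
      have hx' : c < x ∧ x < d := by unfold Between at hbx; omega
      have hxB : x ∉ B := by
        intro hxB
        rcases lt_trichotomy x b with h | h | h
        · exact absurd (hcmax x hxB h) (by omega)
        · exact hbB (h ▸ hxB)
        · exact absurd (hdmin x hxB h) (by omega)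
      have hyB : y ∉ B := fun hyB => hxB (htrans _ _ _ hyB (hsym _ _ hrxy))
      have hyc : y ≠ c := fun h => hyB (h ▸ hcB)
      have hyd : y ≠ d := fun h => hyB (h ▸ hdB)
      have hy' : y < c ∨ d < y := by unfold Between at hby; omega
      rcases hy' with hy' | hy'
      · have h1 : r y c := hnc y c x d hy' hx'.1 hx'.2 (hsym _ _ hrxy) hrcd
        exact hyB (htrans _ _ _ hcB (hsym _ _ h1))
      · have h1 : r c x := hnc c x d y hx'.1 hx'.2 hy' hrcd hrxy
        exact hxB (htrans _ _ _ hcB h1)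
  intro a b h
  rcases lt_trichotomy a b with hab | hab | hab
  · exact aux a b hab h
  · subst hab
    have haS : a ∈ S := by by_contra h'; exact h.2.2.1 ⟨h.1, h'⟩
    exact (hrefl a).2 haS
  · exact hsym _ _ (aux b a hab (krRel_symm h))

def Sodd (n : ℕ) : Set ℕ := oddPos '' Idx n
def Sevn (n : ℕ) : Set ℕ := evenPos '' Idx n

lemma mem_Sodd {n x : ℕ} : x ∈ Sodd n ↔ x % 2 = 1 ∧ x ≤ 2 * n := by
  constructor
  · rintro ⟨i, hi, rfl⟩
    have := mem_Idx.mp hi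
    unfold oddPos; omega
  · rintro ⟨h1, h2⟩
    exact ⟨(x+1)/2, mem_Idx.mpr (by omega), by unfold oddPos; omega⟩

lemma mem_Sevn {n x : ℕ} : x ∈ Sevn n ↔ x % 2 = 0 ∧ 1 ≤ x ∧ x ≤ 2 * n := by
  constructor
  · rintro ⟨i, hi, rfl⟩
    have := mem_Idx.mp hi
    unfold evenPos; omega
  · rintro ⟨h1, h2⟩
    exact ⟨x/2, mem_Idx.mpr (by omega), by unfold evenPos; omega⟩

lemma Sevn_eq {n : ℕ} : Sevn n = Idx (2*n) \ Sodd n := by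
  ext x
  simp only [mem_Sevn, mem_Sodd, Set.mem_diff, mem_Idx]
  omega

lemma Sodd_eq {n : ℕ} : Sodd n = Idx (2*n) \ Sevn n := by
  ext x
  simp only [mem_Sevn, mem_Sodd, Set.mem_diff, mem_Idx]
  omega

lemma partition_dom {S : Set ℕ} {p : ℕ → ℕ → Prop} (hp : IsPartitionOn S p) :
    ∀ i j, p i j → i ∈ S ∧ j ∈ S := by
  obtain ⟨hsym, htrans, hrefl⟩ := hp
  exact fun i j h => ⟨(hrefl i).1 (htrans _ _ _ h (hsym _ _ h)),
    (hrefl j).1 (htrans _ _ _ (hsym _ _ h) h)⟩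

lemma mapRel_odd_partition {n : ℕ} {p : ℕ → ℕ → Prop} (hp : IsPartitionOn (Idx n) p) :
    IsPartitionOn (Sodd n) (mapRel oddPos p) := by
  have dom := partition_dom hp
  obtain ⟨hsym, htrans, hrefl⟩ := hp
  refine ⟨?_, ?_, ?_⟩
  · rintro a b ⟨i, j, rfl, rfl, h⟩; exact ⟨j, i, rfl, rfl, hsym _ _ h⟩
  · rintro a b c ⟨i, j, rfl, rfl, h1⟩ ⟨j', k, hj', rfl, h2⟩
    have hj := mem_Idx.mp (dom _ _ h1).2
    have hj2 := mem_Idx.mp (dom _ _ h2).1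
    have he : j' = j := by unfold oddPos at hj'; omega
    exact ⟨i, k, rfl, rfl, htrans _ _ _ h1 (he ▸ h2)⟩
  · intro a
    constructor
    · rintro ⟨i, j, rfl, hj, h⟩
      exact ⟨i, (dom _ _ h).1, rfl⟩
    · rintro ⟨i, hi, rfl⟩
      exact ⟨i, i, rfl, rfl, (hrefl i).2 hi⟩

lemma mapRel_evn_partition {n : ℕ} {p : ℕ → ℕ → Prop} (hp : IsPartitionOn (Idx n) p) :
    IsPartitionOn (Sevn n) (mapRel evenPos p) := by
  have dom := partition_dom hp
  obtain ⟨hsym, htrans, hrefl⟩ := hp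
  refine ⟨?_, ?_, ?_⟩
  · rintro a b ⟨i, j, rfl, rfl, h⟩; exact ⟨j, i, rfl, rfl, hsym _ _ h⟩
  · rintro a b c ⟨i, j, rfl, rfl, h1⟩ ⟨j', k, hj', rfl, h2⟩
    have he : j' = j := by unfold evenPos at hj'; omega
    exact ⟨i, k, rfl, rfl, htrans _ _ _ h1 (he ▸ h2)⟩
  · intro a
    constructor
    · rintro ⟨i, j, rfl, hj, h⟩
      exact ⟨i, (dom _ _ h).1, rfl⟩
    · rintro ⟨i, hi, rfl⟩
      exact ⟨i, i, rfl, rfl, (hrefl i).2 hi⟩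

lemma mapRel_odd_nc {n : ℕ} {p : ℕ → ℕ → Prop} (hp : IsPartitionOn (Idx n) p)
    (hnc : NonCrossing p) : NonCrossing (mapRel oddPos p) := by
  have dom := partition_dom hp
  rintro a b c d h1 h2 h3 ⟨i, k, rfl, rfl, hik⟩ ⟨j, l, hj, hl, hjl⟩
  subst hj; subst hl
  have b1 := mem_Idx.mp (dom _ _ hik).1
  have b3 := mem_Idx.mp (dom _ _ hik).2
  have b2 := mem_Idx.mp (dom _ _ hjl).1
  have b4 := mem_Idx.mp (dom _ _ hjl).2
  unfold oddPos at h1 h2 h3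
  exact ⟨i, j, rfl, rfl, hnc i j k l (by omega) (by omega) (by omega) hik hjl⟩

lemma mapRel_evn_nc {n : ℕ} {p : ℕ → ℕ → Prop} (hp : IsPartitionOn (Idx n) p)
    (hnc : NonCrossing p) : NonCrossing (mapRel evenPos p) := by
  have dom := partition_dom hp
  rintro a b c d h1 h2 h3 ⟨i, k, rfl, rfl, hik⟩ ⟨j, l, hj, hl, hjl⟩
  subst hj; subst hl
  unfold evenPos at h1 h2 h3
  exact ⟨i, j, rfl, rfl, hnc i j k l (by omega) (by omega) (by omega) hik hjl⟩

lemma mapRel_odd_iff {n : ℕ} {p : ℕ → ℕ → Prop} (hp : IsPartitionOn (Idx n) p) (i j : ℕ) :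
    mapRel oddPos p (oddPos i) (oddPos j) ↔ p i j := by
  have dom := partition_dom hp
  constructor
  · rintro ⟨i', j', hi', hj', h⟩
    have e1 := mem_Idx.mp (dom _ _ h).1
    have e2 := mem_Idx.mp (dom _ _ h).2
    have he : i' = i ∧ j' = j := by unfold oddPos at hi' hj'; omega
    rw [← he.1, ← he.2]; exact h
  · intro h; exact ⟨i, j, rfl, rfl, h⟩

lemma mapRel_evn_iff {n : ℕ} {p : ℕ → ℕ → Prop} (hp : IsPartitionOn (Idx n) p) (i j : ℕ) :
    mapRel evenPos p (evenPos i) (evenPos j) ↔ p i j := by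
  have dom := partition_dom hp
  constructor
  · rintro ⟨i', j', hi', hj', h⟩
    have he : i' = i ∧ j' = j := by unfold evenPos at hi' hj'; omega
    rw [← he.1, ← he.2]; exact h
  · intro h; exact ⟨i, j, rfl, rfl, h⟩

lemma mapRel_pull {f : ℕ → ℕ} {n : ℕ} {Q : ℕ → ℕ → Prop}
    (hsupp : ∀ a b, Q a b → a ∈ f '' Idx n ∧ b ∈ f '' Idx n) :
    mapRel f (fun i j => Q (f i) (f j)) = Q := by
  funext a b
  apply propext
  constructor
  · rintro ⟨i, j, rfl, rfl, h⟩; exact h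
  · intro h
    obtain ⟨⟨i, hi, rfl⟩, ⟨j, hj, rfl⟩⟩ := hsupp a b h
    exact ⟨i, j, rfl, rfl, h⟩

lemma pull_even_partition {n : ℕ} {Q : ℕ → ℕ → Prop}
    (hQ : IsPartitionOn (Idx (2*n) \ Sodd n) Q) :
    IsPartitionOn (Idx n) (fun i j => Q (evenPos i) (evenPos j)) := by
  obtain ⟨hsym, htrans, hrefl⟩ := hQ
  refine ⟨fun i j h => hsym _ _ h, fun i j k h1 h2 => htrans _ _ _ h1 h2, fun i => ?_⟩
  show Q (evenPos i) (evenPos i) ↔ i ∈ Idx n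
  rw [hrefl]
  constructor
  · rintro ⟨hI, -⟩
    have := mem_Idx.mp hI
    exact mem_Idx.mpr (by unfold evenPos at this; omega)
  · intro hi
    have := mem_Idx.mp hi
    refine ⟨mem_Idx.mpr (by unfold evenPos; omega), fun h => ?_⟩
    have h2 := mem_Sodd.mp h
    unfold evenPos at h2; omega

lemma pull_odd_partition {n : ℕ} {Q : ℕ → ℕ → Prop}
    (hQ : IsPartitionOn (Idx (2*n) \ Sevn n) Q) :
    IsPartitionOn (Idx n) (fun i j => Q (oddPos i) (oddPos j)) := by
  obtain ⟨hsym, htrans, hrefl⟩ := hQ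
  refine ⟨fun i j h => hsym _ _ h, fun i j k h1 h2 => htrans _ _ _ h1 h2, fun i => ?_⟩
  show Q (oddPos i) (oddPos i) ↔ i ∈ Idx n
  rw [hrefl]
  constructor
  · rintro ⟨hI, -⟩
    have := mem_Idx.mp hI
    exact mem_Idx.mpr (by unfold oddPos at this; omega)
  · intro hi
    have := mem_Idx.mp hi
    refine ⟨mem_Idx.mpr (by unfold oddPos; omega), fun h => ?_⟩
    have h2 := mem_Sevn.mp h
    unfold oddPos at h2; omega

lemma pull_even_nc {Q : ℕ → ℕ → Prop} (hnc : NonCrossing Q) :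
    NonCrossing (fun i j => Q (evenPos i) (evenPos j)) := by
  intro i j k l h1 h2 h3 H1 H2
  exact hnc _ _ _ _ (by unfold evenPos; omega) (by unfold evenPos; omega)
    (by unfold evenPos; omega) H1 H2

lemma pull_odd_nc {n : ℕ} {Q : ℕ → ℕ → Prop}
    (hdom : ∀ a b, Q a b → a ∈ Idx (2*n) ∧ b ∈ Idx (2*n)) (hnc : NonCrossing Q) :
    NonCrossing (fun i j => Q (oddPos i) (oddPos j)) := by
  intro i j k l h1 h2 h3 H1 H2
  have d1 := mem_Idx.mp (hdom _ _ H1).1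
  have d2 := mem_Idx.mp (hdom _ _ H2).1
  have d3 := mem_Idx.mp (hdom _ _ H1).2
  have d4 := mem_Idx.mp (hdom _ _ H2).2
  unfold oddPos at d1 d2 d3 d4
  exact hnc _ _ _ _ (by unfold oddPos; omega) (by unfold oddPos; omega)
    (by unfold oddPos; omega) H1 H2

lemma kr_kr_odd {n : ℕ} {P : ℕ → ℕ → Prop} (hP : IsPartitionOn (Sodd n) P)
    (hnc : NonCrossing P) (a b : ℕ) :
    krRel (2*n) (Sevn n) (krRel (2*n) (Sodd n) P) a b ↔ P a b := by
  have hsub : Sodd n ⊆ Idx (2*n) := fun x hx => by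
    have := mem_Sodd.mp hx; exact mem_Idx.mpr (by omega)
  have hsucc : ∀ x ∈ Sodd n, x + 1 ≤ 2*n → x + 1 ∈ Idx (2*n) \ Sodd n := by
    intro x hx h
    have := mem_Sodd.mp hx
    exact ⟨mem_Idx.mpr (by omega), fun h2 => by have := mem_Sodd.mp h2; omega⟩
  have hpred : ∀ x ∈ Sodd n, 2 ≤ x → x - 1 ∈ Idx (2*n) \ Sodd n := by
    intro x hx h
    have := mem_Sodd.mp hx
    exact ⟨mem_Idx.mpr (by omega), fun h2 => by have := mem_Sodd.mp h2; omega⟩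
  have hspec : (1:ℕ) ∈ Sodd n → 2*n ∈ Idx (2*n) \ Sodd n := by
    intro h
    have := mem_Sodd.mp h
    exact ⟨mem_Idx.mpr (by omega), fun h2 => by have := mem_Sodd.mp h2; omega⟩
  rw [Sevn_eq]
  exact ⟨kr_kr_subset hsub hsucc hpred hspec hP hnc a b, kr_kr_superset hP hsub a b⟩

lemma kr_kr_evn {n : ℕ} {Q : ℕ → ℕ → Prop} (hQ : IsPartitionOn (Sevn n) Q)
    (hnc : NonCrossing Q) (a b : ℕ) :
    krRel (2*n) (Sodd n) (krRel (2*n) (Sevn n) Q) a b ↔ Q a b := by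
  have hsub : Sevn n ⊆ Idx (2*n) := fun x hx => by
    have := mem_Sevn.mp hx; exact mem_Idx.mpr (by omega)
  have hsucc : ∀ x ∈ Sevn n, x + 1 ≤ 2*n → x + 1 ∈ Idx (2*n) \ Sevn n := by
    intro x hx h
    have := mem_Sevn.mp hx
    exact ⟨mem_Idx.mpr (by omega), fun h2 => by have := mem_Sevn.mp h2; omega⟩
  have hpred : ∀ x ∈ Sevn n, 2 ≤ x → x - 1 ∈ Idx (2*n) \ Sevn n := by
    intro x hx h
    have := mem_Sevn.mp hx
    exact ⟨mem_Idx.mpr (by omega), fun h2 => by have := mem_Sevn.mp h2; omega⟩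
  have hspec : (1:ℕ) ∈ Sevn n → 2*n ∈ Idx (2*n) \ Sevn n := by
    intro h
    exact absurd (mem_Sevn.mp h).1 (by omega)
  rw [Sodd_eq]
  exact ⟨kr_kr_subset hsub hsucc hpred hspec hQ hnc a b, kr_kr_superset hQ hsub a b⟩

/-- for every `p ∈ NC(n)`, `K(p)` is again a non-crossing
partition of `[n]`, and `K : NC(n) → NC(n)` is a bijection. -/
theorem Kmap_bijOn (n : ℕ) :
    (∀ p : ℕ → ℕ → Prop, IsPartitionOn (Idx n) p → NonCrossing p →
      IsPartitionOn (Idx n) (Kmap n p) ∧ NonCrossing (Kmap n p)) ∧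
    Set.BijOn (Kmap n)
      {p : ℕ → ℕ → Prop | IsPartitionOn (Idx n) p ∧ NonCrossing p}
      {p : ℕ → ℕ → Prop | IsPartitionOn (Idx n) p ∧ NonCrossing p} := by
  have forward : ∀ p : ℕ → ℕ → Prop, IsPartitionOn (Idx n) p → NonCrossing p →
      IsPartitionOn (Idx n) (Kmap n p) ∧ NonCrossing (Kmap n p) := by
    intro p hp hnc
    have hP := mapRel_odd_partition hp
    have hQpart : IsPartitionOn (Idx (2*n) \ Sodd n) (krRel (2*n) (Sodd n) (mapRel oddPos p)) :=
      krRel_isPartitionOn hP.1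
    have hQnc : NonCrossing (krRel (2*n) (Sodd n) (mapRel oddPos p)) :=
      krRel_nonCrossing hP.1
    exact ⟨pull_even_partition hQpart, pull_even_nc hQnc⟩
  have recover : ∀ p : ℕ → ℕ → Prop, IsPartitionOn (Idx n) p → NonCrossing p →
      ∀ i j, p i j ↔
        krRel (2*n) (Sevn n) (mapRel evenPos (Kmap n p)) (oddPos i) (oddPos j) := by
    intro p hp hnc i j
    have hP := mapRel_odd_partition hp
    have hPnc := mapRel_odd_nc hp hnc
    have hsupp : ∀ a b, krRel (2*n) (Sodd n) (mapRel oddPos p) a b →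
        a ∈ evenPos '' Idx n ∧ b ∈ evenPos '' Idx n := by
      intro a b h
      have hab : a ∈ Idx (2*n) \ Sodd n ∧ b ∈ Idx (2*n) \ Sodd n :=
        ⟨⟨h.1, h.2.2.1⟩, ⟨h.2.1, h.2.2.2.1⟩⟩
      rw [← Sevn_eq] at hab
      exact hab
    have hME : mapRel evenPos (Kmap n p) = krRel (2*n) (Sodd n) (mapRel oddPos p) :=
      mapRel_pull hsupp
    rw [hME]
    exact ((kr_kr_odd hP hPnc (oddPos i) (oddPos j)).trans (mapRel_odd_iff hp i j)).symm
  have mapsTo : Set.MapsTo (Kmap n)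
      {p : ℕ → ℕ → Prop | IsPartitionOn (Idx n) p ∧ NonCrossing p}
      {p : ℕ → ℕ → Prop | IsPartitionOn (Idx n) p ∧ NonCrossing p} :=
    fun p hp => forward p hp.1 hp.2
  have injOn : Set.InjOn (Kmap n)
      {p : ℕ → ℕ → Prop | IsPartitionOn (Idx n) p ∧ NonCrossing p} := by
    intro p hp q hq h
    funext i j
    apply propext
    rw [recover p hp.1 hp.2 i j, recover q hq.1 hq.2 i j, h]
  have surjOn : Set.SurjOn (Kmap n)
      {p : ℕ → ℕ → Prop | IsPartitionOn (Idx n) p ∧ NonCrossing p}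
      {p : ℕ → ℕ → Prop | IsPartitionOn (Idx n) p ∧ NonCrossing p} := by
    intro q hq
    obtain ⟨hqpart, hqnc⟩ := hq
    have hQp : IsPartitionOn (Sevn n) (mapRel evenPos q) := mapRel_evn_partition hqpart
    have hQnc : NonCrossing (mapRel evenPos q) := mapRel_evn_nc hqpart hqnc
    have hPp : IsPartitionOn (Idx (2*n) \ Sevn n)
        (krRel (2*n) (Sevn n) (mapRel evenPos q)) := krRel_isPartitionOn hQp.1
    have hPnc : NonCrossing (krRel (2*n) (Sevn n) (mapRel evenPos q)) :=
      krRel_nonCrossing hQp.1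
    have hdom : ∀ a b, krRel (2*n) (Sevn n) (mapRel evenPos q) a b →
        a ∈ Idx (2*n) ∧ b ∈ Idx (2*n) := fun a b h => ⟨h.1, h.2.1⟩
    refine ⟨fun i j => krRel (2*n) (Sevn n) (mapRel evenPos q) (oddPos i) (oddPos j),
      ⟨pull_odd_partition hPp, pull_odd_nc hdom hPnc⟩, ?_⟩
    have hsupp : ∀ a b, krRel (2*n) (Sevn n) (mapRel evenPos q) a b →
        a ∈ oddPos '' Idx n ∧ b ∈ oddPos '' Idx n := by
      intro a b h
      have hab : a ∈ Idx (2*n) \ Sevn n ∧ b ∈ Idx (2*n) \ Sevn n :=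
        ⟨⟨h.1, h.2.2.1⟩, ⟨h.2.1, h.2.2.2.1⟩⟩
      rw [← Sodd_eq] at hab
      exact hab
    have hmp : mapRel oddPos
        (fun i j => krRel (2*n) (Sevn n) (mapRel evenPos q) (oddPos i) (oddPos j)) =
        krRel (2*n) (Sevn n) (mapRel evenPos q) := mapRel_pull hsupp
    funext i j
    apply propext
    show krRel (2*n) (oddPos '' Idx n)
        (mapRel oddPos (fun i j => krRel (2*n) (Sevn n) (mapRel evenPos q) (oddPos i) (oddPos j)))
        (evenPos i) (evenPos j) ↔ q i j
    rw [hmp]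
    exact (kr_kr_evn hQp hQnc (evenPos i) (evenPos j)).trans (mapRel_evn_iff hqpart i j)
  exact ⟨forward, mapsTo, injOn, surjOn⟩

end NCPaper
end

section
/- Let p be a non-crossing partition of [n] and let B and B′ be adjacent blocks of p. Then B ⪯ B′, or B′ ⪯ B, or d_p(B) = d_p(B′). -/
namespace NCPaper

section Aux

variable {n : ℕ} {p : ℕ → ℕ → Prop} {B B' C : Set ℕ}

lemma block_rel (hp : IsPartitionOn (Idx n) p) (hB : IsBlock p B) :
    ∀ x ∈ B, ∀ y ∈ B, p x y := by
  obtain ⟨i, hii, rfl⟩ := hB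
  exact fun x hx y hy => hp.2.1 x i y (hp.1 i x hx) hy

lemma block_closed (hp : IsPartitionOn (Idx n) p) (hB : IsBlock p B) :
    ∀ x ∈ B, ∀ y, p x y → y ∈ B := by
  obtain ⟨i, hii, rfl⟩ := hB
  exact fun x hx y hxy => hp.2.1 i x y hx hxy

lemma block_nonempty (hB : IsBlock p B) : B.Nonempty := by
  obtain ⟨i, hii, rfl⟩ := hB; exact ⟨i, hii⟩

lemma block_bdd (hp : IsPartitionOn (Idx n) p) (hB : IsBlock p B) : BddAbove B := by
  refine ⟨n, fun x hx => ?_⟩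
  exact ((hp.2.2 x).1 (block_rel hp hB x hx x hx)).2

lemma block_sInf_mem (hB : IsBlock p B) : sInf B ∈ B :=
  Nat.sInf_mem (block_nonempty hB)

lemma block_sSup_mem (hp : IsPartitionOn (Idx n) p) (hB : IsBlock p B) : sSup B ∈ B :=
  Nat.sSup_mem (block_nonempty hB) (block_bdd hp hB)

lemma block_sInf_le_sSup (hp : IsPartitionOn (Idx n) p) (hB : IsBlock p B) :
    sInf B ≤ sSup B :=
  Nat.sInf_le (block_sSup_mem hp hB)

lemma block_eq_of_mem (hp : IsPartitionOn (Idx n) p) (hB : IsBlock p B)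
    (hC : IsBlock p C) {x : ℕ} (hxB : x ∈ B) (hxC : x ∈ C) : B = C := by
  ext y
  constructor
  · intro hy; exact block_closed hp hC x hxC y (block_rel hp hB x hxB y hy)
  · intro hy; exact block_closed hp hB x hxB y (block_rel hp hC x hxC y hy)

lemma mergeRel_comm (p : ℕ → ℕ → Prop) (B B' : Set ℕ) :
    mergeRel p B B' = mergeRel p B' B := by
  funext i j
  unfold mergeRel
  rw [Set.union_comm]

lemma block_self_rel (hp : IsPartitionOn (Idx n) p) (hB : IsBlock p B) {x : ℕ}
    (hx : x ∈ B) : p x x := block_rel hp hB x hx x hx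

/-- Transfer of enclosures from `B` to `B'` when `B` lies strictly left of `B'`
and merging keeps the partition non-crossing. -/
lemma nested_transfer_right (hp : IsPartitionOn (Idx n) p)
    (hB : IsBlock p B) (hB' : IsBlock p B')
    (hm : NonCrossing (mergeRel p B B'))
    (hsep : sSup B < sInf B') (hC : IsBlock p C)
    (hN : Nested B C) : Nested B' C := by
  obtain ⟨h1, h2⟩ := hN
  have hBinf := block_sInf_le_sSup hp hB
  have hB'infsup := block_sInf_le_sSup hp hB'
  have hCinf := block_sInf_mem hC
  have hCsup := block_sSup_mem hp hC
  have hBsup := block_sSup_mem hp hB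
  have hB'sup := block_sSup_mem hp hB'
  have hCneB : C ≠ B := by
    intro h; rw [h] at h1; omega
  constructor
  · omega
  · -- show sSup B' < sSup C
    by_contra hcon
    push_neg at hcon
    -- C ≠ B'
    have hCneB' : C ≠ B' := by
      intro h; rw [h] at h1; omega
    have hne : sSup C ≠ sSup B' := by
      intro h
      exact hCneB' (block_eq_of_mem hp hC hB' hCsup (h ▸ hB'sup))
    have hlt : sSup C < sSup B' := lt_of_le_of_ne hcon hne
    have hq1 : mergeRel p B B' (sInf C) (sSup C) :=
      Or.inl (block_rel hp hC _ hCinf _ hCsup)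
    have hq2 : mergeRel p B B' (sSup B) (sSup B') :=
      Or.inr ⟨block_self_rel hp hB hBsup, block_self_rel hp hB' hB'sup,
        Or.inl hBsup, Or.inr hB'sup⟩
    have := hm (sInf C) (sSup B) (sSup C) (sSup B')
      (by omega) h2 hlt hq1 hq2
    rcases this with h | ⟨_, _, hmem, _⟩
    · exact hCneB (block_eq_of_mem hp hC hB (block_closed hp hC _ hCinf _ h) hBsup)
    · rcases hmem with h | h
      · have := Nat.sInf_le h; omega
      · have := Nat.sInf_le h; omega

/-- Transfer of enclosures from `B'` to `B` when `B` lies strictly left of `B'`. -/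
lemma nested_transfer_left (hp : IsPartitionOn (Idx n) p)
    (hB : IsBlock p B) (hB' : IsBlock p B')
    (hm : NonCrossing (mergeRel p B B'))
    (hsep : sSup B < sInf B') (hC : IsBlock p C)
    (hN : Nested B' C) : Nested B C := by
  obtain ⟨h1, h2⟩ := hN
  have hBinf := block_sInf_le_sSup hp hB
  have hB'infsup := block_sInf_le_sSup hp hB'
  have hCinf := block_sInf_mem hC
  have hCsup := block_sSup_mem hp hC
  have hBinfmem := block_sInf_mem hB
  have hCneB : C ≠ B := by
    intro h; rw [h] at h2; omega
  constructor
  · -- show sInf C < sInf B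
    by_contra hcon
    push_neg at hcon
    have hne : sInf B ≠ sInf C := by
      intro h
      have hmemC : sInf B ∈ C := by rw [h]; exact hCinf
      exact hCneB (block_eq_of_mem hp hC hB hmemC hBinfmem)
    have hlt : sInf B < sInf C := lt_of_le_of_ne hcon hne
    have hq1 : mergeRel p B B' (sInf B) (sInf B') :=
      Or.inr ⟨block_self_rel hp hB hBinfmem, block_self_rel hp hB' (block_sInf_mem hB'),
        Or.inl hBinfmem, Or.inr (block_sInf_mem hB')⟩
    have hq2 : mergeRel p B B' (sInf C) (sSup C) :=
      Or.inl (block_rel hp hC _ hCinf _ hCsup)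
    have := hm (sInf B) (sInf C) (sInf B') (sSup C)
      hlt h1 (by omega) hq1 hq2
    rcases this with h | ⟨-, -, -, hmem⟩
    · exact hCneB (block_eq_of_mem hp hC hB hCinf (block_closed hp hB _ hBinfmem _ h))
    · rcases hmem with h | h
      · exact hCneB (block_eq_of_mem hp hC hB hCinf h)
      · have := Nat.sInf_le h; omega
  · omega

/-- Transport of a depth-witnessing chain from `B` to `B'`. -/
lemma chain_transfer {m : ℕ} (hB' : IsBlock p B')
    (h : ∀ C, IsBlock p C → Nested B C → Nested B' C)
    (hc : ∃ c : ℕ → Set ℕ, c 1 = B ∧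
      (∀ i, 1 ≤ i → i ≤ m → IsBlock p (c i)) ∧
      (∀ i, 1 ≤ i → i < m → Nested (c i) (c (i + 1)))) :
    ∃ c : ℕ → Set ℕ, c 1 = B' ∧
      (∀ i, 1 ≤ i → i ≤ m → IsBlock p (c i)) ∧
      (∀ i, 1 ≤ i → i < m → Nested (c i) (c (i + 1))) := by
  obtain ⟨c, hc1, hcb, hcn⟩ := hc
  refine ⟨fun i => if i = 1 then B' else c i, if_pos rfl, ?_, ?_⟩
  · intro i h1 h2
    by_cases hi : i = 1
    · simpa [hi] using hB'
    · simpa [hi] using hcb i h1 h2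
  · intro i h1 h2
    by_cases hi : i = 1
    · subst hi
      simp only [if_pos rfl, if_neg (by omega : (1 : ℕ) + 1 ≠ 1)]
      exact h (c 2) (hcb 2 (by omega) (by omega)) (hc1 ▸ hcn 1 le_rfl h2)
    · simp only [if_neg hi, if_neg (by omega : i + 1 ≠ 1)]
      exact hcn i h1 h2

lemma depth_eq_of_transfer (hB : IsBlock p B) (hB' : IsBlock p B')
    (h1 : ∀ C, IsBlock p C → Nested B C → Nested B' C)
    (h2 : ∀ C, IsBlock p C → Nested B' C → Nested B C) :
    depth p B = depth p B' := by
  unfold depth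
  congr 1
  ext m
  exact ⟨chain_transfer hB' h1, chain_transfer hB h2⟩

end Aux

/-- if `B` and `B'` are adjacent blocks of a non-crossing
partition `p` of `[n]`, then `B ⪯ B'`, or `B' ⪯ B`, or `d_p(B) = d_p(B')`. -/
theorem adjacent_blocks_trichotomy
    (n : ℕ) (p : ℕ → ℕ → Prop)
    (hp : IsPartitionOn (Idx n) p) (hnc : NonCrossing p)
    (B B' : Set ℕ) (hadj : Adjacent p B B') :
    Nested B B' ∨ Nested B' B ∨ depth p B = depth p B' := by
  obtain ⟨hB, hB', hne, hm⟩ := hadj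
  have hBinf := block_sInf_mem hB
  have hBsup := block_sSup_mem hp hB
  have hB'inf := block_sInf_mem hB'
  have hB'sup := block_sSup_mem hp hB'
  have hBis := block_sInf_le_sSup hp hB
  have hB'is := block_sInf_le_sSup hp hB'
  have hdisj : ∀ x, x ∈ B → x ∈ B' → False := fun x h1 h2 =>
    hne (block_eq_of_mem hp hB hB' h1 h2)
  have hii : sInf B ≠ sInf B' := fun h => hdisj _ hBinf (by rw [h]; exact hB'inf)
  rcases lt_or_gt_of_ne hii with h | h
  · -- sInf B < sInf B'
    rcases lt_trichotomy (sSup B) (sInf B') with h2 | h2 | h2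
    · -- spans disjoint, B strictly left of B'
      right; right
      exact depth_eq_of_transfer hB hB'
        (fun C hC => nested_transfer_right hp hB hB' hm h2 hC)
        (fun C hC => nested_transfer_left hp hB hB' hm h2 hC)
    · exact (hdisj _ hBsup (by rw [h2]; exact hB'inf)).elim
    · rcases lt_trichotomy (sSup B') (sSup B) with h3 | h3 | h3
      · right; left; exact ⟨h, h3⟩
      · exact (hdisj _ hBsup (by rw [← h3]; exact hB'sup)).elim
      · exfalso
        have hp1 : p (sInf B) (sSup B) := block_rel hp hB _ hBinf _ hBsup
        have hp2 : p (sInf B') (sSup B') := block_rel hp hB' _ hB'inf _ hB'sup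
        have := hnc (sInf B) (sInf B') (sSup B) (sSup B') h h2 h3 hp1 hp2
        exact hdisj _ (block_closed hp hB _ hBinf _ this) hB'inf
  · -- sInf B' < sInf B
    have hm' : NonCrossing (mergeRel p B' B) := by
      rw [← mergeRel_comm]; exact hm
    rcases lt_trichotomy (sSup B') (sInf B) with h2 | h2 | h2
    · -- spans disjoint, B' strictly left of B
      right; right
      exact depth_eq_of_transfer hB hB'
        (fun C hC => nested_transfer_left hp hB' hB hm' h2 hC)
        (fun C hC => nested_transfer_right hp hB' hB hm' h2 hC)
    · exact (hdisj _ hBinf (by rw [← h2]; exact hB'sup)).elim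
    · rcases lt_trichotomy (sSup B) (sSup B') with h3 | h3 | h3
      · left; exact ⟨h, h3⟩
      · exact (hdisj _ hBsup (by rw [h3]; exact hB'sup)).elim
      · exfalso
        have hp1 : p (sInf B) (sSup B) := block_rel hp hB _ hBinf _ hBsup
        have hp2 : p (sInf B') (sSup B') := block_rel hp hB' _ hB'inf _ hB'sup
        have := hnc (sInf B') (sInf B) (sSup B') (sSup B) h h2 h3 hp2 hp1
        exact hdisj _ hBinf (block_closed hp hB' _ hB'inf _ this)

end NCPaper
end
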